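/- For every f : {-1,1}^r → [-1,1] with λ := E_μ[|f|] (μ uniform), there exists a semi-threshold function g with E_μ[|g|] ≤ λ such that E_μ[f(x)·Σ_i x_i] ≤ E_μ[g(x)·Σ_i x_i]. That is, the maximum of E_μ[f·Σ_i x_i] subject to E_μ[|f|] ≤ λ is attained at a semi-threshold function. -/
import Mathlib


open Finset

noncomputable section

/-- The ±1 value of a Boolean coordinate. -/
def sgn (b : Bool) : ℝ := if b then 1 else -1

/-- Weight of a point of the cube `{-1,1}^r` under the product measure with
`P(x_i = 1) = p i`. -/
def wt {r : ℕ} (p : Fin r → ℝ) (x : Fin r → Bool) : ℝ :=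
  ∏ i, if x i then p i else 1 - p i

/-- Expectation of `f` under the product measure `μ_p`. -/
def Ex {r : ℕ} (p : Fin r → ℝ) (f : (Fin r → Bool) → ℝ) : ℝ :=
  ∑ x : Fin r → Bool, wt p x * f x

/-- Conditional expectation `E_{μ_p}[f | x_i = b]`. -/
def condEx {r : ℕ} (p : Fin r → ℝ) (f : (Fin r → Bool) → ℝ) (i : Fin r) (b : Bool) : ℝ :=
  (∑ x : Fin r → Bool, if x i = b then wt p x * f x else 0) / (if b then p i else 1 - p i)

/-- The uniform product measure (each `p i = 1/2`). -/
def half (r : ℕ) : Fin r → ℝ := fun _ => 1 / 2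

/-- `S x = Σ_i x_i` with coordinates interpreted as ±1. -/
def S {r : ℕ} (x : Fin r → Bool) : ℝ := ∑ i, sgn (x i)

/-- A semi-threshold function with parameters `k ≥ 0` and `β ∈ [0,1]`. -/
def IsSemiThreshold {r : ℕ} (g : (Fin r → Bool) → ℝ) : Prop :=
  ∃ (k : ℕ) (β : ℝ), 0 ≤ β ∧ β ≤ 1 ∧ ∀ x,
    g x = if (k : ℝ) < S x then 1
      else if S x = (k : ℝ) then β
      else if S x = -(k : ℝ) then -β
      else if S x < -(k : ℝ) then -1
      else 0

/-! ### Auxiliary lemmas -/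

lemma wt_half {r : ℕ} (x : Fin r → Bool) : wt (half r) x = (1/2 : ℝ)^r := by
  unfold wt half
  have h : ∀ i : Fin r, (if x i then (1:ℝ)/2 else 1 - 1/2) = 1/2 := by
    intro i; split <;> norm_num
  rw [Finset.prod_congr rfl (fun i _ => h i), Finset.prod_const]
  simp

lemma wt_half_nonneg {r : ℕ} (x : Fin r → Bool) : 0 ≤ wt (half r) x := by
  rw [wt_half]; positivity

lemma Ex_congr {r : ℕ} (p : Fin r → ℝ) {u v : (Fin r → Bool) → ℝ}
    (h : ∀ x, u x = v x) : Ex p u = Ex p v := by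
  unfold Ex; exact Finset.sum_congr rfl (fun x _ => by rw [h x])

lemma Ex_add {r : ℕ} (p : Fin r → ℝ) (u v : (Fin r → Bool) → ℝ) :
    Ex p (fun x => u x + v x) = Ex p u + Ex p v := by
  unfold Ex
  rw [← Finset.sum_add_distrib]
  exact Finset.sum_congr rfl (fun x _ => by ring)

lemma Ex_sub {r : ℕ} (p : Fin r → ℝ) (u v : (Fin r → Bool) → ℝ) :
    Ex p (fun x => u x - v x) = Ex p u - Ex p v := by
  unfold Ex
  rw [← Finset.sum_sub_distrib]
  exact Finset.sum_congr rfl (fun x _ => by ring)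

lemma Ex_const_mul {r : ℕ} (p : Fin r → ℝ) (c : ℝ) (u : (Fin r → Bool) → ℝ) :
    Ex p (fun x => c * u x) = c * Ex p u := by
  unfold Ex
  rw [Finset.mul_sum]
  exact Finset.sum_congr rfl (fun x _ => by ring)

lemma Ex_mono {r : ℕ} {u v : (Fin r → Bool) → ℝ} (h : ∀ x, u x ≤ v x) :
    Ex (half r) u ≤ Ex (half r) v := by
  unfold Ex
  exact Finset.sum_le_sum fun x _ =>
    mul_le_mul_of_nonneg_left (h x) (wt_half_nonneg x)

lemma Ex_nonneg {r : ℕ} {u : (Fin r → Bool) → ℝ} (h : ∀ x, 0 ≤ u x) :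
    0 ≤ Ex (half r) u := by
  have := Ex_mono (r := r) (u := fun _ => 0) (v := u) h
  simpa [Ex] using this

lemma Ex_one {r : ℕ} : Ex (half r) (fun _ => 1) = 1 := by
  unfold Ex
  have : ∀ x : Fin r → Bool, wt (half r) x * 1 = (1/2:ℝ)^r := by
    intro x; rw [wt_half, mul_one]
  rw [Finset.sum_congr rfl (fun x _ => this x), Finset.sum_const]
  simp [Finset.card_univ]

lemma abs_S_le {r : ℕ} (x : Fin r → Bool) : |S x| ≤ (r : ℝ) := by
  unfold S
  calc |∑ i, sgn (x i)| ≤ ∑ i, |sgn (x i)| := Finset.abs_sum_le_sum_abs _ _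
    _ = ∑ _i : Fin r, (1:ℝ) := Finset.sum_congr rfl (fun i _ => by
        unfold sgn; split <;> norm_num)
    _ = r := by simp

lemma S_int {r : ℕ} (x : Fin r → Bool) : ∃ z : ℤ, S x = (z : ℝ) := by
  refine ⟨∑ i, if x i then 1 else -1, ?_⟩
  unfold S sgn
  push_cast [apply_ite (Int.cast : ℤ → ℝ)]
  rfl

/-- indicator split: `{|S| > n} = {|S| > n+1} ⊔ {|S| = n+1}` (using integrality of `S`). -/
lemma indicator_split {r : ℕ} (n : ℕ) (x : Fin r → Bool) :
    (if (n:ℝ) < |S x| then (1:ℝ) else 0) =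
      (if ((n+1:ℕ):ℝ) < |S x| then (1:ℝ) else 0) +
        (if |S x| = ((n+1:ℕ):ℝ) then (1:ℝ) else 0) := by
  obtain ⟨z, hz⟩ := S_int x
  have h1 : |S x| = ((|z| : ℤ) : ℝ) := by rw [hz, ← Int.cast_abs]
  rw [h1]
  have e1 : ((n:ℝ) < ((|z|:ℤ):ℝ)) ↔ ((n:ℤ) < |z|) := by exact_mod_cast Iff.rfl
  have e2 : (((n+1:ℕ):ℝ) < ((|z|:ℤ):ℝ)) ↔ (((n:ℤ)+1) < |z|) := by
    push_cast; exact_mod_cast Iff.rfl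
  have e3 : (((|z|:ℤ):ℝ) = ((n+1:ℕ):ℝ)) ↔ (|z| = (n:ℤ)+1) := by
    push_cast; exact_mod_cast Iff.rfl
  simp only [e1, e2, e3]
  split_ifs with h1 h2 h3
  all_goals try (exfalso; omega)
  all_goals norm_num

/-- The bathtub profile: `1` on `{|S| > k}`, `β` on `{|S| = k}`, `0` below. -/
def Gfun {r : ℕ} (k : ℕ) (β : ℝ) (x : Fin r → Bool) : ℝ :=
  (if (k:ℝ) < |S x| then 1 else 0) + β * (if |S x| = (k:ℝ) then 1 else 0)

/-- The semi-threshold function. -/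
def gfun {r : ℕ} (k : ℕ) (β : ℝ) (x : Fin r → Bool) : ℝ :=
  if (k : ℝ) < S x then 1
    else if S x = (k : ℝ) then β
    else if S x = -(k : ℝ) then -β
    else if S x < -(k : ℝ) then -1
    else 0

lemma abs_gfun {r : ℕ} (k : ℕ) (β : ℝ) (hβ : 0 ≤ β) (x : Fin r → Bool) :
    |gfun k β x| = Gfun k β x := by
  have hk0 : (0:ℝ) ≤ (k:ℝ) := Nat.cast_nonneg k
  unfold gfun Gfun
  by_cases h1 : (k:ℝ) < S x
  · have habs : |S x| = S x := abs_of_pos (hk0.trans_lt h1)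
    rw [if_pos h1, habs, if_pos h1, if_neg (ne_of_gt h1)]
    norm_num
  · by_cases h2 : S x = (k:ℝ)
    · have habs : |S x| = (k:ℝ) := by rw [h2]; exact abs_of_nonneg hk0
      rw [if_neg h1, if_pos h2, habs, if_neg (lt_irrefl _), if_pos rfl]
      simp [abs_of_nonneg hβ]
    · by_cases h3 : S x = -(k:ℝ)
      · have hkpos : (0:ℝ) < (k:ℝ) := by
          rcases hk0.eq_or_lt with h | h
          · exfalso; apply h2; rw [h3, ← h]; ring
          · exact h
        have habs : |S x| = (k:ℝ) := by rw [h3, abs_neg, abs_of_nonneg hk0]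
        rw [if_neg h1, if_neg h2, if_pos h3, habs, if_neg (lt_irrefl _), if_pos rfl]
        simp [abs_of_nonneg hβ]
      · by_cases h4 : S x < -(k:ℝ)
        · have habs : |S x| = -S x := abs_of_neg (h4.trans_le (by linarith))
          rw [if_neg h1, if_neg h2, if_neg h3, if_pos h4, habs,
            if_pos (by linarith), if_neg (by intro h; apply h3; linarith)]
          norm_num
        · have hb1 : S x < (k:ℝ) := lt_of_le_of_ne (not_lt.mp h1) h2
          have hb2 : -(k:ℝ) < S x := lt_of_le_of_ne (not_lt.mp h4) (Ne.symm h3)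
          have habs : |S x| < (k:ℝ) := abs_lt.mpr ⟨hb2, hb1⟩
          rw [if_neg h1, if_neg h2, if_neg h3, if_neg h4,
            if_neg (not_lt.mpr habs.le), if_neg (ne_of_lt habs)]
          norm_num

lemma gfun_mul_S {r : ℕ} (k : ℕ) (β : ℝ) (x : Fin r → Bool) :
    gfun k β x * S x = Gfun k β x * |S x| := by
  have hk0 : (0:ℝ) ≤ (k:ℝ) := Nat.cast_nonneg k
  unfold gfun Gfun
  by_cases h1 : (k:ℝ) < S x
  · have habs : |S x| = S x := abs_of_pos (hk0.trans_lt h1)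
    rw [if_pos h1, habs, if_pos h1, if_neg (ne_of_gt h1)]
    ring
  · by_cases h2 : S x = (k:ℝ)
    · have habs : |S x| = (k:ℝ) := by rw [h2]; exact abs_of_nonneg hk0
      rw [if_neg h1, if_pos h2, habs, if_neg (lt_irrefl _), if_pos rfl, h2]
      ring
    · by_cases h3 : S x = -(k:ℝ)
      · have habs : |S x| = (k:ℝ) := by rw [h3, abs_neg, abs_of_nonneg hk0]
        rw [if_neg h1, if_neg h2, if_pos h3, habs, if_neg (lt_irrefl _), if_pos rfl, h3]
        ring
      · by_cases h4 : S x < -(k:ℝ)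
        · have habs : |S x| = -S x := abs_of_neg (h4.trans_le (by linarith))
          rw [if_neg h1, if_neg h2, if_neg h3, if_pos h4, habs,
            if_pos (by linarith), if_neg (by intro h; apply h3; linarith)]
          ring
        · have hb1 : S x < (k:ℝ) := lt_of_le_of_ne (not_lt.mp h1) h2
          have hb2 : -(k:ℝ) < S x := lt_of_le_of_ne (not_lt.mp h4) (Ne.symm h3)
          have habs : |S x| < (k:ℝ) := abs_lt.mpr ⟨hb2, hb1⟩
          rw [if_neg h1, if_neg h2, if_neg h3, if_neg h4,
            if_neg (not_lt.mpr habs.le), if_neg (ne_of_lt habs)]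
          ring


def Aex (r : ℕ) (k : ℕ) : ℝ := Ex (half r) (fun x => if (k:ℝ) < |S x| then 1 else 0)

def Bex (r : ℕ) (k : ℕ) : ℝ := Ex (half r) (fun x => if |S x| = (k:ℝ) then 1 else 0)

lemma Aex_nonneg (r k : ℕ) : 0 ≤ Aex r k :=
  Ex_nonneg (fun x => by split <;> norm_num)

lemma Bex_nonneg (r k : ℕ) : 0 ≤ Bex r k :=
  Ex_nonneg (fun x => by split <;> norm_num)

lemma Aex_succ (r n : ℕ) : Aex r n = Aex r (n+1) + Bex r (n+1) := by
  unfold Aex Bex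
  rw [Ex_congr (half r) (indicator_split (r := r) n), Ex_add]

lemma Aex_self (r : ℕ) : Aex r r = 0 := by
  unfold Aex
  rw [Ex_congr (half r) (v := fun _ => 0)
    (fun x => if_neg (not_lt.mpr (abs_S_le x)))]
  simp [Ex]

lemma one_le_Aex_zero_add (r : ℕ) : (1:ℝ) ≤ Aex r 0 + Bex r 0 := by
  unfold Aex Bex
  rw [← Ex_add]
  calc (1:ℝ) = Ex (half r) (fun _ => 1) := Ex_one.symm
    _ ≤ _ := by
      apply Ex_mono
      intro x
      by_cases h : |S x| = ((0:ℕ):ℝ)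
      · rw [if_neg (by rw [h]; norm_num), if_pos h]; norm_num
      · have h0 : (0:ℝ) < |S x| :=
          lt_of_le_of_ne (abs_nonneg _) (Ne.symm (by simpa using h))
        rw [if_pos (by simpa using h0), if_neg h]; norm_num

lemma Ex_Gfun (r k : ℕ) (β : ℝ) :
    Ex (half r) (Gfun k β) = Aex r k + β * Bex r k := by
  unfold Gfun Aex Bex
  rw [Ex_add, Ex_const_mul]

/-- the maximum of E[f·Σᵢxᵢ] subject to E[|f|] ≤ λ is attained at a
semi-threshold function. -/
theorem stmt7 {r : ℕ} (f : (Fin r → Bool) → ℝ)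
    (hf : ∀ x, f x ∈ Set.Icc (-1 : ℝ) 1) :
    ∃ g : (Fin r → Bool) → ℝ, IsSemiThreshold g ∧
      Ex (half r) (fun x => |g x|) ≤ Ex (half r) (fun x => |f x|) ∧
      Ex (half r) (fun x => f x * S x) ≤ Ex (half r) (fun x => g x * S x) := by
  classical
  set lam := Ex (half r) (fun x => |f x|) with hlam
  have habsf : ∀ x, |f x| ≤ 1 := fun x => abs_le.mpr ⟨(hf x).1, (hf x).2⟩
  have hlam0 : 0 ≤ lam := Ex_nonneg (fun x => abs_nonneg _)
  have hlam1 : lam ≤ 1 := by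
    rw [hlam, ← Ex_one (r := r)]
    exact Ex_mono habsf
  have hex : ∃ n, Aex r n ≤ lam := ⟨r, by rw [Aex_self]; exact hlam0⟩
  set k0 := Nat.find hex with hk0def
  have hAk : Aex r k0 ≤ lam := Nat.find_spec hex
  -- upper bound : lam ≤ Aex r k0 + Bex r k0
  have hup : lam ≤ Aex r k0 + Bex r k0 := by
    rcases Nat.eq_zero_or_pos k0 with h0 | hpos
    · rw [h0]
      exact hlam1.trans (one_le_Aex_zero_add r)
    · obtain ⟨n, hn⟩ : ∃ n, k0 = n + 1 := ⟨k0 - 1, by omega⟩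
      have hmin : ¬ Aex r n ≤ lam := Nat.find_min hex (by omega)
      have hAn : Aex r n = Aex r k0 + Bex r k0 := by rw [hn]; exact Aex_succ r n
      have hlt : lam < Aex r n := not_le.mp hmin
      rw [hAn] at hlt
      exact hlt.le
  -- define β
  set β := if Bex r k0 = 0 then 0 else (lam - Aex r k0) / Bex r k0 with hβdef
  have hABeq : Bex r k0 = 0 → Aex r k0 = lam := by
    intro h
    rw [h, add_zero] at hup
    exact le_antisymm hAk hup
  have hβ0 : 0 ≤ β := by
    rw [hβdef]
    split_ifs with h
    · exact le_rfl
    · exact div_nonneg (by linarith)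
        (lt_of_le_of_ne (Bex_nonneg r k0) (Ne.symm h)).le
  have hβ1 : β ≤ 1 := by
    rw [hβdef]
    split_ifs with h
    · norm_num
    · rw [div_le_one (lt_of_le_of_ne (Bex_nonneg r k0) (Ne.symm h))]
      linarith
  have hβB : β * Bex r k0 = lam - Aex r k0 := by
    rw [hβdef]
    split_ifs with h
    · rw [h, mul_zero, hABeq h]; ring
    · rw [div_mul_cancel₀ _ h]
  -- expectation of Gfun
  have hExG : Ex (half r) (Gfun k0 β) = lam := by
    rw [Ex_Gfun, hβB]; ring
  refine ⟨gfun k0 β, ⟨k0, β, hβ0, hβ1, fun x => rfl⟩, ?_, ?_⟩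
  · -- E|g| = lam = E|f|
    have heq : Ex (half r) (fun x => |gfun k0 β x|) = lam := by
      rw [Ex_congr (half r) (fun x => abs_gfun k0 β hβ0 x)]
      exact hExG
    rw [heq]
  · -- E[f S] ≤ E[g S]
    have step1 : Ex (half r) (fun x => f x * S x) ≤
        Ex (half r) (fun x => |f x| * |S x|) := by
      apply Ex_mono
      intro x
      calc f x * S x ≤ |f x * S x| := le_abs_self _
        _ = |f x| * |S x| := abs_mul _ _
    have step2 : Ex (half r) (fun x => |f x| * |S x|) ≤
        Ex (half r) (fun x => Gfun k0 β x * |S x|) := by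
      have hpt : ∀ x, 0 ≤ (Gfun k0 β x - |f x|) * (|S x| - (k0:ℝ)) := by
        intro x
        unfold Gfun
        by_cases h1 : (k0:ℝ) < |S x|
        · rw [if_pos h1, if_neg (ne_of_gt h1)]
          have hle : |f x| ≤ 1 + β * 0 := by rw [mul_zero, add_zero]; exact habsf x
          apply mul_nonneg <;> linarith
        · by_cases h2 : |S x| = (k0:ℝ)
          · rw [h2]; simp
          · have hlt : |S x| < (k0:ℝ) := lt_of_le_of_ne (not_lt.mp h1) h2
            rw [if_neg h1, if_neg h2]
            have h5 : (0:ℝ) + β * 0 - |f x| ≤ 0 := by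
              have := abs_nonneg (f x); linarith [mul_zero β]
            nlinarith
      have hE0 : 0 ≤ Ex (half r)
          (fun x => (Gfun k0 β x - |f x|) * (|S x| - (k0:ℝ))) :=
        Ex_nonneg hpt
      have hexp : Ex (half r) (fun x => (Gfun k0 β x - |f x|) * (|S x| - (k0:ℝ))) =
          Ex (half r) (fun x => Gfun k0 β x * |S x|) -
            Ex (half r) (fun x => |f x| * |S x|) -
            (k0:ℝ) * (Ex (half r) (Gfun k0 β) - Ex (half r) (fun x => |f x|)) := by
        rw [show (fun x : Fin r → Bool => (Gfun k0 β x - |f x|) * (|S x| - (k0:ℝ))) =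
            (fun x => (Gfun k0 β x * |S x| - |f x| * |S x|) -
              (k0:ℝ) * (Gfun k0 β x - |f x|)) from funext (fun x => by ring)]
        rw [Ex_sub, Ex_sub, Ex_const_mul, Ex_sub]
      rw [hexp, hExG, ← hlam] at hE0
      linarith
    have step3 : Ex (half r) (fun x => Gfun k0 β x * |S x|) =
        Ex (half r) (fun x => gfun k0 β x * S x) :=
      (Ex_congr (half r) (fun x => (gfun_mul_S k0 β x))).symm
    linarith
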